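/- Let t >= 2, p = 2^t - 1, q = exp(2*pi*i/p), and for real a, b, c with a + b + c = 1 define Pi_j = prod_{alpha=0}^{t-1} (a * q^{2^alpha (2^j - 1)} + b + c * q^{-2^alpha (2^j - 1)}). Then for 0 <= j <= t, the complex conjugate of Pi_j equals Pi_{t-j}. -/

import Mathlib

/-- with `p = 2^t - 1`, `q = exp(2πi/p)` and
`Π_j = ∏_{α=0}^{t-1} (a q^{2^α(2^j-1)} + b + c q^{-2^α(2^j-1)})`,
the complex conjugate of `Π_j` equals `Π_{t-j}` for `0 ≤ j ≤ t`. -/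
theorem conj_Pi_eq_Pi_sub (t : ℕ) (ht : 2 ≤ t) (p : ℕ) (hp : p = 2^t - 1)
    (a b c : ℝ) (habc : a + b + c = 1) (j : ℕ) (hj : j ≤ t) :
    (starRingEnd ℂ) (∏ α ∈ Finset.range t,
        ((a : ℂ) * Complex.exp (2 * Real.pi * Complex.I / p) ^ ((2^α * (2^j - 1) : ℕ))
          + b + c * Complex.exp (2 * Real.pi * Complex.I / p) ^ (-((2:ℤ)^α * (2^j - 1))))) =
      ∏ α ∈ Finset.range t,
        ((a : ℂ) * Complex.exp (2 * Real.pi * Complex.I / p) ^ ((2^α * (2^(t-j) - 1) : ℕ))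
          + b + c * Complex.exp (2 * Real.pi * Complex.I / p) ^ (-((2:ℤ)^α * (2^(t-j) - 1)))) := by
  have ht4 : 4 ≤ 2^t := by
    have := Nat.pow_le_pow_right (show 0 < 2 by norm_num) ht
    simpa using this
  have hp3 : 3 ≤ p := by omega
  set q : ℂ := Complex.exp (2 * Real.pi * Complex.I / p) with hqdef
  have hpC : (p : ℂ) ≠ 0 := by
    exact_mod_cast Nat.cast_ne_zero.mpr (by omega)
  have hq0 : q ≠ 0 := Complex.exp_ne_zero _
  have hqp : q ^ p = 1 := by
    rw [hqdef, ← Complex.exp_nat_mul, mul_div_cancel₀ _ hpC, Complex.exp_two_pi_mul_I]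
  have hconj : (starRingEnd ℂ) q = q⁻¹ := by
    rw [hqdef, ← Complex.exp_conj, ← Complex.exp_neg]
    congr 1
    simp [map_div₀, Complex.conj_I, map_ofNat]
    ring
  -- key: if p ∣ e + f then q ^ (f:ℤ) = q ^ (-(e:ℤ))
  have key : ∀ e f : ℕ, p ∣ e + f → q ^ (f:ℤ) = q ^ (-(e:ℤ)) := by
    intro e f ⟨k, hk⟩
    have h1 : q ^ (e + f) = 1 := by rw [hk, pow_mul, hqp, one_pow]
    have h2 : q ^ (e:ℤ) * q ^ (f:ℤ) = 1 := by
      rw [← zpow_add₀ hq0, ← Nat.cast_add, zpow_natCast, h1]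
    rw [zpow_neg]
    exact eq_inv_of_mul_eq_one_left (by rw [mul_comm]; exact h2)
  -- powers of two mod p
  have two_pow_t : (2 : ZMod p) ^ t = 1 := by
    have h1 : ((2^t : ℕ) : ZMod p) = ((p + 1 : ℕ) : ZMod p) := by congr 1; omega
    push_cast at h1
    simpa [ZMod.natCast_self] using h1
  have powmod : ∀ m : ℕ, (2 : ZMod p) ^ m = (2 : ZMod p) ^ (m % t) := by
    intro m
    conv_lhs => rw [← Nat.div_add_mod m t]
    rw [pow_add, pow_mul, two_pow_t, one_pow, one_mul]
  rw [map_prod]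
  refine Finset.prod_bij' (fun α _ => (α + j) % t) (fun α _ => (α + (t - j)) % t)
    (fun α hα => Finset.mem_range.mpr (Nat.mod_lt _ (by omega)))
    (fun α hα => Finset.mem_range.mpr (Nat.mod_lt _ (by omega))) ?_ ?_ ?_
  · intro α hα
    show ((α + j) % t + (t - j)) % t = α
    rw [Nat.mod_add_mod]
    have : α + j + (t - j) = α + t := by omega
    rw [this, Nat.add_mod_right, Nat.mod_eq_of_lt (Finset.mem_range.mp hα)]
  · intro α hα
    show ((α + (t - j)) % t + j) % t = α
    rw [Nat.mod_add_mod]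
    have : α + (t - j) + j = α + t := by omega
    rw [this, Nat.add_mod_right, Nat.mod_eq_of_lt (Finset.mem_range.mp hα)]
  · intro α hα
    have hαt := Finset.mem_range.mp hα
    set β := (α + j) % t with hβ
    have hβt : β < t := Nat.mod_lt _ (by omega)
    -- the divisibility
    have hdvd : p ∣ 2^α * (2^j - 1) + 2^β * (2^(t-j) - 1) := by
      rw [← ZMod.natCast_eq_zero_iff]
      have h1j : 1 ≤ 2^j := Nat.one_le_two_pow
      have h1tj : 1 ≤ 2^(t-j) := Nat.one_le_two_pow
      push_cast [Nat.cast_sub h1j, Nat.cast_sub h1tj]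
      have e1 : (2 : ZMod p)^(α + j) = 2^β := by
        rw [powmod (α + j), powmod β, hβ, Nat.mod_mod_of_dvd _ dvd_rfl]
      have e2 : (2 : ZMod p)^(β + (t - j)) = 2^α := by
        rw [powmod (β + (t - j)), hβ, Nat.mod_add_mod]
        have : α + j + (t - j) = α + t := by omega
        rw [this, Nat.add_mod_right, Nat.mod_eq_of_lt hαt]
      rw [pow_add] at e1 e2
      linear_combination e1 + e2
    have hkey := key _ _ hdvd
    have cast1 : ((2:ℤ)^α * (2^j - 1)) = ((2^α * (2^j - 1) : ℕ) : ℤ) := by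
      push_cast [Nat.cast_sub (Nat.one_le_two_pow : 1 ≤ 2^j)]; ring
    have cast2 : ((2:ℤ)^β * (2^(t-j) - 1)) = ((2^β * (2^(t-j) - 1) : ℕ) : ℤ) := by
      push_cast [Nat.cast_sub (Nat.one_le_two_pow : 1 ≤ 2^(t-j))]; ring
    set e : ℕ := 2^α * (2^j - 1) with he
    set f : ℕ := 2^β * (2^(t-j) - 1) with hf
    have hqe : q ^ (f:ℤ) = q ^ (-(e:ℤ)) := hkey
    have hqe' : q ^ (-(f:ℤ)) = q ^ (e:ℤ) := by
      rw [zpow_neg, hqe, zpow_neg, inv_inv]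
    simp only [map_add, map_mul, Complex.conj_ofReal, map_pow, map_zpow₀, hconj]
    rw [cast1, cast2]
    have A : q⁻¹ ^ e = q ^ f := by
      rw [inv_pow, ← zpow_natCast q e, ← zpow_natCast q f, hqe, zpow_neg]
    have B : (q⁻¹) ^ (-(e:ℤ)) = q ^ (-(f:ℤ)) := by
      rw [inv_zpow, ← zpow_neg, neg_neg, ← hqe']
    rw [A, B]
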